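/- arXiv:1911.05222 — 5 statements merged into one kernel-verified Lean document; each statement's English description precedes it below -/
import Mathlib

section
/- Let V be a finite-dimensional real inner product space, K : V × V → V a symmetric bilinear map, K_X the linear operator Y ↦ K(X,Y), ε, λ, a ∈ ℝ, T ∈ V with K(T,T) = λT, and define R(X,Y)Z := ε(⟨Y,Z⟩X − ⟨X,Z⟩Y) − (K_X K_Y − K_Y K_X)Z. If R(X,T)T = −a X for every X orthogonal to T, then K_T(K_T X) − λ K_T X + (ε‖T‖² + a) X = 0 for every X orthogonal to T; i.e. the restriction of K_T to the orthogonal complement of T satisfies the quadratic polynomial equation x² − λx + (ε‖T‖² + a) = 0. -/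
open scoped RealInnerProductSpace

/-- Pointwise operator form of Lemma 3.2(i): if `K T T = λ T` and the
Gauss-equation curvature satisfies `R(X,T)T = −a X` for all `X ⊥ T`, then on `T^⊥`
the operator `K_T` satisfies `K_T² − λ K_T + (ε‖T‖² + a) id = 0`. -/
theorem KT_satisfies_quadratic
    {V : Type*} [NormedAddCommGroup V] [InnerProductSpace ℝ V] [FiniteDimensional ℝ V]
    (K : V →ₗ[ℝ] V →ₗ[ℝ] V) (hKsymm : ∀ X Y : V, K X Y = K Y X)
    (eps lam a : ℝ) (T : V) (hTT : K T T = lam • T)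
    (R : V → V → V → V)
    (hR : ∀ X Y Z : V,
      R X Y Z = eps • (⟪Y, Z⟫ • X - ⟪X, Z⟫ • Y) - (K X (K Y Z) - K Y (K X Z)))
    (hcurv : ∀ X : V, ⟪X, T⟫ = 0 → R X T T = (-a) • X) :
    ∀ X : V, ⟪X, T⟫ = 0 →
      K T (K T X) - lam • K T X + (eps * ‖T‖ ^ 2 + a) • X = 0 := by
  intro X hX
  have h1 := hcurv X hX
  rw [hR] at h1
  rw [hX, hTT, real_inner_self_eq_norm_sq, hKsymm X T] at h1
  simp only [map_smul, LinearMap.smul_apply, zero_smul, sub_zero, smul_smul] at h1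
  rw [hKsymm X T] at h1
  have : K T (K T X) - lam • K T X + (eps * ‖T‖ ^ 2 + a) • X
      = ((eps * ‖T‖ ^ 2) • X - (lam • K T X - K T (K T X))) - (-a) • X := by
    module
  rw [this, h1, sub_self]
end

section
/- Let V be a finite-dimensional real inner product space, K : V × V → V a symmetric bilinear map, K_X the operator Y ↦ K(X,Y), ε, λ, a ∈ ℝ, T ∈ V with K(T,T) = λT, and R(X,Y)Z := ε(⟨Y,Z⟩X − ⟨X,Z⟩Y) − (K_X K_Y − K_Y K_X)Z. Assume R(X,T)T = −a X for every X orthogonal to T. Then every real number μ for which there exists a nonzero vector X orthogonal to T with K_T X = μX satisfies μ² − λμ + ε‖T‖² + a = 0; consequently there are at most two such eigenvalues of K_T on the orthogonal complement of T. -/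
open scoped RealInnerProductSpace

/-- Lemma 3.2(i), pointwise eigenvalue form: under `K T T = λ T` and
`R(X,T)T = −a X` for `X ⊥ T`, every eigenvalue `μ` of `K_T` on the orthogonal
complement of `T` satisfies `μ² − λμ + ε‖T‖² + a = 0`; in particular there are
at most two such eigenvalues. -/
theorem KT_eigenvalues_quadratic_at_most_two
    {V : Type*} [NormedAddCommGroup V] [InnerProductSpace ℝ V] [FiniteDimensional ℝ V]
    (K : V →ₗ[ℝ] V →ₗ[ℝ] V) (hKsymm : ∀ X Y : V, K X Y = K Y X)
    (eps lam a : ℝ) (T : V) (hTT : K T T = lam • T)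
    (R : V → V → V → V)
    (hR : ∀ X Y Z : V,
      R X Y Z = eps • (⟪Y, Z⟫ • X - ⟪X, Z⟫ • Y) - (K X (K Y Z) - K Y (K X Z)))
    (hcurv : ∀ X : V, ⟪X, T⟫ = 0 → R X T T = (-a) • X) :
    (∀ μ : ℝ, (∃ X : V, X ≠ 0 ∧ ⟪X, T⟫ = 0 ∧ K T X = μ • X) →
        μ ^ 2 - lam * μ + eps * ‖T‖ ^ 2 + a = 0) ∧
      ({μ : ℝ | ∃ X : V, X ≠ 0 ∧ ⟪X, T⟫ = 0 ∧ K T X = μ • X}.encard ≤ 2) := by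
  have key : ∀ μ : ℝ, (∃ X : V, X ≠ 0 ∧ ⟪X, T⟫ = 0 ∧ K T X = μ • X) →
      μ ^ 2 - lam * μ + eps * ‖T‖ ^ 2 + a = 0 := by
    intro μ ⟨X, hX0, hXT, hKX⟩
    have h1 := hcurv X hXT
    rw [hR] at h1
    have hTT2 : ⟪T, T⟫ = (‖T‖:ℝ) ^ 2 := real_inner_self_eq_norm_sq T
    have hXKT : K X T = μ • X := by rw [hKsymm]; exact hKX
    have hKXT : K X (K T T) = (lam * μ) • X := by
      rw [hTT, map_smul, hXKT, smul_smul]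
    have hKTX : K T (K X T) = (μ * μ) • X := by
      rw [hXKT, map_smul, hKX, smul_smul]
    rw [hXT, hTT2, hKXT, hKTX] at h1
    have h2 : (μ ^ 2 - lam * μ + eps * ‖T‖ ^ 2 + a) • X = 0 := by
      have := h1
      rw [sub_eq_iff_eq_add] at this
      have : (eps * ‖T‖ ^ 2) • X - ((lam * μ) • X - (μ * μ) • X)
          = (-a) • X := by
        simpa [smul_smul, sub_zero, zero_smul, smul_sub] using h1
      have h3 : ((eps * ‖T‖ ^ 2) - (lam * μ) + (μ * μ) + a) • X = 0 := by
        rw [← sub_eq_zero] at this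
        rw [← this]
        module
      rw [← h3]; ring_nf
    rcases smul_eq_zero.mp h2 with h | h
    · linarith [h]
    · exact absurd h hX0
  refine ⟨key, ?_⟩
  set S := {μ : ℝ | ∃ X : V, X ≠ 0 ∧ ⟪X, T⟫ = 0 ∧ K T X = μ • X}
  rcases Set.eq_empty_or_nonempty S with hS | ⟨r, hr⟩
  · simp [hS]
  · have hsub : S ⊆ {r, lam - r} := by
      intro s hs
      simp only [Set.mem_insert_iff, Set.mem_singleton_iff]
      have h1 := key s hs
      have h2 := key r hr
      have : (s - r) * (s + r - lam) = 0 := by nlinarith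
      rcases mul_eq_zero.mp this with h | h
      · left; linarith
      · right; linarith
    calc S.encard ≤ ({r, lam - r} : Set ℝ).encard := Set.encard_le_encard hsub
      _ ≤ 2 := by
        apply le_trans (Set.encard_insert_le _ _)
        norm_num [Set.encard_singleton]
end

section
/- Let I ⊆ ℝ be an interval and λ, α, μ, s : I → ℝ differentiable functions and ε ∈ ℝ satisfying s′ = 2αs, μ′ = (λ − μ)α and α′ = −μ² + λμ − εs on I. Then the function εs − μ² + α² is constant on I. -/
/-- If on an interval `I` one has `s′ = 2αs`, `μ′ = (λ − μ)α` and
`α′ = −μ² + λμ − εs`, then `εs − μ² + α²` is constant on `I`. -/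
theorem c0_constant
    (I : Set ℝ) (hI : I.OrdConnected) (eps : ℝ) (lam alp mu s : ℝ → ℝ)
    (hs : ∀ t ∈ I, HasDerivAt s (2 * alp t * s t) t)
    (hmu : ∀ t ∈ I, HasDerivAt mu ((lam t - mu t) * alp t) t)
    (halp : ∀ t ∈ I, HasDerivAt alp (-(mu t) ^ 2 + lam t * mu t - eps * s t) t) :
    ∀ t₁ ∈ I, ∀ t₂ ∈ I,
      eps * s t₁ - (mu t₁) ^ 2 + (alp t₁) ^ 2
        = eps * s t₂ - (mu t₂) ^ 2 + (alp t₂) ^ 2 := by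
  set F : ℝ → ℝ := fun t => eps * s t - (mu t) ^ 2 + (alp t) ^ 2 with hF
  have hder : ∀ t ∈ I, HasDerivAt F 0 t := by
    intro t ht
    have h : HasDerivAt F
        (eps * (2 * alp t * s t) - 2 * mu t ^ (2 - 1) * ((lam t - mu t) * alp t)
          + 2 * alp t ^ (2 - 1) * (-(mu t) ^ 2 + lam t * mu t - eps * s t)) t := by
      exact (((hs t ht).const_mul eps).sub ((hmu t ht).pow 2)).add ((halp t ht).pow 2)
    convert h using 1
    ring
  have key : ∀ a ∈ I, ∀ b ∈ I, a ≤ b → F a = F b := by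
    intro a ha b hb hab
    have hsub : Set.Icc a b ⊆ I := hI.out ha hb
    have := constant_of_has_deriv_right_zero
      (f := F) (a := a) (b := b)
      (fun x hx => ((hder x (hsub hx)).continuousAt).continuousWithinAt)
      (fun x hx => ((hder x (hsub (Set.mem_Icc_of_Ico hx))).hasDerivWithinAt))
    exact (this b (Set.right_mem_Icc.2 hab)).symm
  intro t₁ h₁ t₂ h₂
  rcases le_total t₁ t₂ with h | h
  · exact key t₁ h₁ t₂ h₂ h
  · exact (key t₂ h₂ t₁ h₁ h).symm
end

section
/- Let I ⊆ ℝ be an interval, λ, α, μ, s : I → ℝ with α, μ differentiable, ε ∈ ℝ, satisfying α′ = −μ² + λμ − εs and μ′ = (λ − μ)α on I. Let A : I → ℝ be an antiderivative of α + μ. Then the function x₁ := exp∘A satisfies the second-order linear ODE x₁″ = (λ + α)·x₁′ − εs·x₁ on I. -/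
/-- First half of Lemma 3.3: under `α′ = −μ² + λμ − εs` and
`μ′ = (λ − μ)α` on an interval `I`, and `A′ = α + μ`, the function
`x₁ = exp ∘ A` solves `x₁″ = (λ + α)x₁′ − εs·x₁` on `I`. -/
theorem x1_solves_ode
    (I : Set ℝ) (hI : I.OrdConnected) (eps : ℝ) (lam alp mu s A : ℝ → ℝ)
    (halp : ∀ t ∈ I, HasDerivAt alp (-(mu t) ^ 2 + lam t * mu t - eps * s t) t)
    (hmu : ∀ t ∈ I, HasDerivAt mu ((lam t - mu t) * alp t) t)
    (hA : ∀ t ∈ I, HasDerivAt A (alp t + mu t) t) :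
    ∃ x₁' : ℝ → ℝ,
      (∀ t ∈ I, HasDerivAt (fun u => Real.exp (A u)) (x₁' t) t) ∧
      (∀ t ∈ I, HasDerivAt x₁'
        ((lam t + alp t) * x₁' t - eps * s t * Real.exp (A t)) t) := by
  refine ⟨fun t => (alp t + mu t) * Real.exp (A t), fun t ht => ?_, fun t ht => ?_⟩
  · simpa [mul_comm] using ((hA t ht).exp)
  · have h1 := ((halp t ht).add (hmu t ht)).mul ((hA t ht).exp)
    refine h1.congr_deriv ?_
    simp only [Pi.add_apply]
    ring
end

section
/- Let I ⊆ ℝ be an interval, λ, α, μ, s : I → ℝ with λ continuous and α, μ differentiable, ε ∈ ℝ, satisfying α′ = −μ² + λμ − εs and μ′ = (λ − μ)α on I. Let A be an antiderivative of α + μ, B an antiderivative of λ − 2μ − α, and G an antiderivative of exp∘B on I. Then the function x₂ := (exp∘A)·G satisfies the second-order linear ODE x₂″ = (λ + α)·x₂′ − εs·x₂ on I. -/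
/-- Second half of Lemma 3.3: under `α′ = −μ² + λμ − εs` and
`μ′ = (λ − μ)α` on an interval `I`, with `A′ = α + μ`, `B′ = λ − 2μ − α` and
`G′ = exp ∘ B`, the function `x₂ = (exp ∘ A)·G` solves
`x₂″ = (λ + α)x₂′ − εs·x₂` on `I`. -/
theorem x2_solves_ode
    (I : Set ℝ) (hI : I.OrdConnected) (eps : ℝ) (lam alp mu s A B G : ℝ → ℝ)
    (hlam : ContinuousOn lam I)
    (halp : ∀ t ∈ I, HasDerivAt alp (-(mu t) ^ 2 + lam t * mu t - eps * s t) t)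
    (hmu : ∀ t ∈ I, HasDerivAt mu ((lam t - mu t) * alp t) t)
    (hA : ∀ t ∈ I, HasDerivAt A (alp t + mu t) t)
    (hB : ∀ t ∈ I, HasDerivAt B (lam t - 2 * mu t - alp t) t)
    (hG : ∀ t ∈ I, HasDerivAt G (Real.exp (B t)) t) :
    ∃ x₂' : ℝ → ℝ,
      (∀ t ∈ I, HasDerivAt (fun u => Real.exp (A u) * G u) (x₂' t) t) ∧
      (∀ t ∈ I, HasDerivAt x₂'
        ((lam t + alp t) * x₂' t - eps * s t * (Real.exp (A t) * G t)) t) := by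
  refine ⟨fun t => Real.exp (A t) * ((alp t + mu t) * G t + Real.exp (B t)), ?_, ?_⟩
  · intro t ht
    have h : HasDerivAt (fun u => Real.exp (A u) * G u) _ t := ((hA t ht).exp).mul (hG t ht)
    convert h using 1
    ring
  · intro t ht
    have h : HasDerivAt (fun t => Real.exp (A t) * ((alp t + mu t) * G t + Real.exp (B t))) _ t := ((hA t ht).exp).mul
      ((((halp t ht).fun_add (hmu t ht)).mul (hG t ht)).add ((hB t ht).exp))
    convert h using 1
    ring
end
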